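/- For jointly distributed finite discrete random variables, the mutual information satisfies I(Y_S ∪ {Z} ; W) - I(Y_S ; W) ≥ I(Y_T ∪ {Z} ; W) - I(Y_T ; W) whenever S ⊆ T, provided the variables {Y_i} are conditionally independent given W. That is, S ↦ I(Y_S ; W) is submodular. -/

import Mathlib

open Finset

/-- Probability that a finite discrete random variable `X` takes value `b`. -/
def probOf {Ω β : Type*} [Fintype Ω] (p : Ω → ℝ) (X : Ω → β) [DecidableEq β]
    (b : β) : ℝ :=
  ∑ ω, if X ω = b then p ω else 0

/-- Shannon entropy of a finite discrete random variable. -/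
noncomputable def shannonEntropy {Ω β : Type*} [Fintype Ω] [Fintype β] [DecidableEq β]
    (p : Ω → ℝ) (X : Ω → β) : ℝ :=
  ∑ b, Real.negMulLog (probOf p X b)

/-- Mutual information `I(X;W) = H(X) + H(W) - H(X,W)`. -/
noncomputable def mutualInfo {Ω β γ : Type*} [Fintype Ω] [Fintype β] [Fintype γ]
    [DecidableEq β] [DecidableEq γ] (p : Ω → ℝ) (X : Ω → β) (W : Ω → γ) : ℝ :=
  shannonEntropy p X + shannonEntropy p W - shannonEntropy p (fun ω => (X ω, W ω))

/-- The joint random variable `Y_S = (Y i)_{i ∈ S}`. -/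
def jointVar {Ω ι β : Type*} (Y : ι → Ω → β) (S : Finset ι) (ω : Ω) :
    {i // i ∈ S} → β :=
  fun i => Y i.1 ω

set_option maxHeartbeats 1000000

section helpers

variable {Ω : Type*} [Fintype Ω] (p : Ω → ℝ)

lemma probOf_nonneg (hp : ∀ ω, 0 ≤ p ω) {β : Type*} [DecidableEq β] (X : Ω → β) (b : β) :
    0 ≤ probOf p X b :=
  Finset.sum_nonneg fun ω _ => by split <;> simp [hp ω]

lemma probOf_le_of_implies (hp : ∀ ω, 0 ≤ p ω) {β γ : Type*} [DecidableEq β] [DecidableEq γ]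
    (X : Ω → β) (Z : Ω → γ) (b : β) (c : γ) (himp : ∀ ω, X ω = b → Z ω = c) :
    probOf p X b ≤ probOf p Z c := by
  unfold probOf
  refine Finset.sum_le_sum fun ω _ => ?_
  by_cases hx : X ω = b
  · simp [hx, himp ω hx]
  · simp only [hx, if_false]
    split <;> simp [hp ω]

lemma sum_probOf_fst {α β : Type*} [Fintype α] [DecidableEq α] [DecidableEq β]
    (X : Ω → α) (Z : Ω → β) (b : β) :
    ∑ a, probOf p (fun ω => (X ω, Z ω)) (a, b) = probOf p Z b := by
  unfold probOf
  rw [Finset.sum_comm]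
  refine Finset.sum_congr rfl fun ω _ => ?_
  by_cases hb : Z ω = b <;> simp [Prod.ext_iff, hb, Finset.sum_ite_eq]

lemma sum_probOf_snd {α β : Type*} [DecidableEq α] [Fintype β] [DecidableEq β]
    (X : Ω → α) (Z : Ω → β) (a : α) :
    ∑ b, probOf p (fun ω => (X ω, Z ω)) (a, b) = probOf p X a := by
  unfold probOf
  rw [Finset.sum_comm]
  refine Finset.sum_congr rfl fun ω _ => ?_
  by_cases ha : X ω = a <;> simp [Prod.ext_iff, ha, Finset.sum_ite_eq]

lemma sum_probOf_left3 {α β γ : Type*} [DecidableEq α] [Fintype β] [DecidableEq β] [DecidableEq γ]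
    (U : Ω → α) (V : Ω → β) (Wv : Ω → γ) (u : α) (w : γ) :
    ∑ v, probOf p (fun ω => ((U ω, V ω), Wv ω)) ((u, v), w)
      = probOf p (fun ω => (U ω, Wv ω)) (u, w) := by
  unfold probOf
  rw [Finset.sum_comm]
  refine Finset.sum_congr rfl fun ω _ => ?_
  by_cases h1 : U ω = u <;> by_cases h2 : Wv ω = w <;>
    simp [Prod.ext_iff, h1, h2, Finset.sum_ite_eq]

lemma sum_probOf_mid3 {α β γ : Type*} [Fintype α] [DecidableEq α] [DecidableEq β] [DecidableEq γ]
    (U : Ω → α) (V : Ω → β) (Wv : Ω → γ) (v : β) (w : γ) :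
    ∑ u, probOf p (fun ω => ((U ω, V ω), Wv ω)) ((u, v), w)
      = probOf p (fun ω => (V ω, Wv ω)) (v, w) := by
  unfold probOf
  rw [Finset.sum_comm]
  refine Finset.sum_congr rfl fun ω _ => ?_
  by_cases h1 : V ω = v <;> by_cases h2 : Wv ω = w <;>
    simp [Prod.ext_iff, h1, h2, Finset.sum_ite_eq]

lemma probOf_comp_inj {α β : Type*} [DecidableEq α] [DecidableEq β]
    (X : Ω → α) (f : α → β) (hf : Function.Injective f) (a : α) :
    probOf p (fun ω => f (X ω)) (f a) = probOf p X a := by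
  unfold probOf
  exact Finset.sum_congr rfl fun ω _ => by simp [hf.eq_iff]

lemma probOf_comp_eq_zero {α β : Type*} [DecidableEq α] [DecidableEq β]
    (X : Ω → α) (f : α → β) (b : β) (hb : ∀ a, f a ≠ b) :
    probOf p (fun ω => f (X ω)) b = 0 :=
  Finset.sum_eq_zero fun ω _ => by simp [hb (X ω)]

end helpers

section helpers2

variable {Ω : Type*} [Fintype Ω] (p : Ω → ℝ)

lemma shannonEntropy_comp_inj {α β : Type*} [Fintype α] [DecidableEq α] [Fintype β] [DecidableEq β]
    (X : Ω → α) (f : α → β) (hf : Function.Injective f) :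
    shannonEntropy p (fun ω => f (X ω)) = shannonEntropy p X := by
  unfold shannonEntropy
  rw [← Finset.sum_subset (Finset.subset_univ (Finset.univ.image f)) (fun b _ hb => ?_),
    Finset.sum_image (fun a _ a' _ h => hf h)]
  · exact Finset.sum_congr rfl fun a _ => by rw [probOf_comp_inj p X f hf]
  · rw [probOf_comp_eq_zero p X f b
      (fun a h => hb (Finset.mem_image.2 ⟨a, Finset.mem_univ _, h⟩)), Real.negMulLog_zero]

lemma entropy_condIndep {α β γ : Type*} [Fintype α] [DecidableEq α] [Fintype β] [DecidableEq β]
    [Fintype γ] [DecidableEq γ] (hp : ∀ ω, 0 ≤ p ω)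
    (U : Ω → α) (V : Ω → β) (Wv : Ω → γ)
    (h : ∀ u v w, probOf p (fun ω => ((U ω, V ω), Wv ω)) ((u, v), w) * probOf p Wv w
        = probOf p (fun ω => (U ω, Wv ω)) (u, w) * probOf p (fun ω => (V ω, Wv ω)) (v, w)) :
    shannonEntropy p (fun ω => ((U ω, V ω), Wv ω)) + shannonEntropy p Wv
      = shannonEntropy p (fun ω => (U ω, Wv ω)) + shannonEntropy p (fun ω => (V ω, Wv ω)) := by
  set P3 : α → β → γ → ℝ := fun u v w => probOf p (fun ω => ((U ω, V ω), Wv ω)) ((u, v), w) with hP3def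
  set Puw : α → γ → ℝ := fun u w => probOf p (fun ω => (U ω, Wv ω)) (u, w) with hPuwdef
  set Pvw : β → γ → ℝ := fun v w => probOf p (fun ω => (V ω, Wv ω)) (v, w) with hPvwdef
  set Pw : γ → ℝ := fun w => probOf p Wv w with hPwdef
  have hmargV : ∀ u w, ∑ v, P3 u v w = Puw u w := fun u w => sum_probOf_left3 p U V Wv u w
  have hmargU : ∀ v w, ∑ u, P3 u v w = Pvw v w := fun v w => sum_probOf_mid3 p U V Wv v w
  have hmargW : ∀ w, ∑ u, Puw u w = Pw w := fun w => sum_probOf_fst p U Wv w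
  have key : ∀ u v w, P3 u v w * Real.log (P3 u v w)
      = P3 u v w * Real.log (Puw u w) + P3 u v w * Real.log (Pvw v w)
        - P3 u v w * Real.log (Pw w) := by
    intro u v w
    rcases eq_or_lt_of_le (probOf_nonneg p hp _ ((u, v), w) : 0 ≤ P3 u v w) with h0 | h0
    · have h0' : P3 u v w = 0 := h0.symm
      rw [h0']; ring
    · have hPw : 0 < Pw w :=
        lt_of_lt_of_le h0 (probOf_le_of_implies p hp _ Wv _ w (fun ω hω => by
          simpa using congrArg Prod.snd hω))
      have hprod : 0 < Puw u w * Pvw v w := by rw [← h u v w]; exact mul_pos h0 hPw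
      have hu' : Puw u w ≠ 0 := by
        intro e; rw [e, zero_mul] at hprod; exact lt_irrefl 0 hprod
      have hv' : Pvw v w ≠ 0 := by
        intro e; rw [e, mul_zero] at hprod; exact lt_irrefl 0 hprod
      have hP3eq : P3 u v w = Puw u w * Pvw v w / Pw w :=
        (eq_div_iff hPw.ne').mpr (h u v w)
      have hlog : Real.log (P3 u v w)
          = Real.log (Puw u w) + Real.log (Pvw v w) - Real.log (Pw w) := by
        rw [hP3eq, Real.log_div (mul_ne_zero hu' hv') hPw.ne', Real.log_mul hu' hv']
      rw [hlog]; ring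
  have H3 : shannonEntropy p (fun ω => ((U ω, V ω), Wv ω))
      = -∑ u, ∑ v, ∑ w, P3 u v w * Real.log (P3 u v w) := by
    simp only [shannonEntropy, Fintype.sum_prod_type, Real.negMulLog_def, neg_mul,
      Finset.sum_neg_distrib]
    rfl
  have HUW : shannonEntropy p (fun ω => (U ω, Wv ω))
      = -∑ u, ∑ w, Puw u w * Real.log (Puw u w) := by
    simp only [shannonEntropy, Fintype.sum_prod_type, Real.negMulLog_def, neg_mul,
      Finset.sum_neg_distrib]
    rfl
  have HVW : shannonEntropy p (fun ω => (V ω, Wv ω))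
      = -∑ v, ∑ w, Pvw v w * Real.log (Pvw v w) := by
    simp only [shannonEntropy, Fintype.sum_prod_type, Real.negMulLog_def, neg_mul,
      Finset.sum_neg_distrib]
    rfl
  have HW : shannonEntropy p Wv = -∑ w, Pw w * Real.log (Pw w) := by
    simp only [shannonEntropy, Real.negMulLog_def, neg_mul, Finset.sum_neg_distrib]
    rfl
  have e1 : ∑ u, ∑ v, ∑ w, P3 u v w * Real.log (Puw u w)
      = ∑ u, ∑ w, Puw u w * Real.log (Puw u w) := by
    refine Finset.sum_congr rfl fun u _ => ?_
    rw [Finset.sum_comm]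
    refine Finset.sum_congr rfl fun w _ => ?_
    rw [← Finset.sum_mul, hmargV u w]
  have e2 : ∑ u, ∑ v, ∑ w, P3 u v w * Real.log (Pvw v w)
      = ∑ v, ∑ w, Pvw v w * Real.log (Pvw v w) := by
    rw [Finset.sum_comm]
    refine Finset.sum_congr rfl fun v _ => ?_
    rw [Finset.sum_comm]
    refine Finset.sum_congr rfl fun w _ => ?_
    rw [← Finset.sum_mul, hmargU v w]
  have e3 : ∑ u, ∑ v, ∑ w, P3 u v w * Real.log (Pw w)
      = ∑ w, Pw w * Real.log (Pw w) := by
    have h1 : ∀ u, ∑ v, ∑ w, P3 u v w * Real.log (Pw w)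
        = ∑ w, Puw u w * Real.log (Pw w) := by
      intro u
      rw [Finset.sum_comm]
      refine Finset.sum_congr rfl fun w _ => ?_
      rw [← Finset.sum_mul, hmargV u w]
    simp_rw [h1]
    rw [Finset.sum_comm]
    refine Finset.sum_congr rfl fun w _ => ?_
    rw [← Finset.sum_mul, hmargW w]
  have expand : ∑ u, ∑ v, ∑ w, P3 u v w * Real.log (P3 u v w)
      = (∑ u, ∑ w, Puw u w * Real.log (Puw u w))
        + (∑ v, ∑ w, Pvw v w * Real.log (Pvw v w))
        - (∑ w, Pw w * Real.log (Pw w)) := by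
    simp_rw [key]
    rw [← e1, ← e2, ← e3]
    simp [Finset.sum_add_distrib, Finset.sum_sub_distrib]
  rw [H3, HUW, HVW, HW, expand]
  ring

lemma entropy_submodular {α β γ : Type*} [Fintype α] [DecidableEq α] [Fintype β] [DecidableEq β]
    [Fintype γ] [DecidableEq γ] (hp : ∀ ω, 0 ≤ p ω)
    (A : Ω → α) (B : Ω → β) (C : Ω → γ) :
    shannonEntropy p (fun ω => ((A ω, B ω), C ω)) + shannonEntropy p B
      ≤ shannonEntropy p (fun ω => (A ω, B ω)) + shannonEntropy p (fun ω => (B ω, C ω)) := by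
  set P3 : α → β → γ → ℝ := fun a b c => probOf p (fun ω => ((A ω, B ω), C ω)) ((a, b), c) with hP3def
  set Pab : α → β → ℝ := fun a b => probOf p (fun ω => (A ω, B ω)) (a, b) with hPabdef
  set Pbc : β → γ → ℝ := fun b c => probOf p (fun ω => (B ω, C ω)) (b, c) with hPbcdef
  set Pb : β → ℝ := fun b => probOf p B b with hPbdef
  have hmargC : ∀ a b, ∑ c, P3 a b c = Pab a b := fun a b =>
    sum_probOf_snd p (fun ω => (A ω, B ω)) C (a, b)
  have hmargA : ∀ b c, ∑ a, P3 a b c = Pbc b c := fun b c => sum_probOf_mid3 p A B C b c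
  have hmargAb : ∀ b, ∑ a, Pab a b = Pb b := fun b => sum_probOf_fst p A B b
  have hmargCb : ∀ b, ∑ c, Pbc b c = Pb b := fun b => sum_probOf_snd p B C b
  -- pointwise Gibbs bound
  have key : ∀ a b c,
      P3 a b c * Real.log (Pab a b) + P3 a b c * Real.log (Pbc b c)
        - P3 a b c * Real.log (Pb b) - P3 a b c * Real.log (P3 a b c)
      ≤ Pab a b * Pbc b c / Pb b - P3 a b c := by
    intro a b c
    rcases eq_or_lt_of_le (probOf_nonneg p hp _ ((a, b), c) : 0 ≤ P3 a b c) with h0 | h0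
    · have h0' : P3 a b c = 0 := h0.symm
      rw [h0']
      simp only [zero_mul, sub_zero, add_zero, sub_zero, zero_sub, neg_zero]
      have : (0:ℝ) ≤ Pab a b * Pbc b c / Pb b := by
        have h1 := probOf_nonneg p hp (fun ω => (A ω, B ω)) (a, b)
        have h2 := probOf_nonneg p hp (fun ω => (B ω, C ω)) (b, c)
        have h3 := probOf_nonneg p hp B b
        positivity
      linarith
    · have hPab : 0 < Pab a b :=
        lt_of_lt_of_le h0 (probOf_le_of_implies p hp _ (fun ω => (A ω, B ω)) _ (a, b)
          (fun ω hω => by simpa using congrArg Prod.fst hω))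
      have hPbc : 0 < Pbc b c :=
        lt_of_lt_of_le h0 (probOf_le_of_implies p hp _ (fun ω => (B ω, C ω)) _ (b, c)
          (fun ω hω => by
            have h1 := congrArg (fun q => q.1.2) hω
            have h2 := congrArg Prod.snd hω
            simp at h1 h2
            simp [h1, h2]))
      have hPb : 0 < Pb b :=
        lt_of_lt_of_le h0 (probOf_le_of_implies p hp _ B _ b
          (fun ω hω => by simpa using congrArg (fun q => q.1.2) hω))
      set q : ℝ := Pab a b * Pbc b c / Pb b with hq
      have hqpos : 0 < q := by positivity
      have hlogq : Real.log q = Real.log (Pab a b) + Real.log (Pbc b c) - Real.log (Pb b) := by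
        rw [hq, Real.log_div (mul_ne_zero hPab.ne' hPbc.ne') hPb.ne',
          Real.log_mul hPab.ne' hPbc.ne']
      have hle : Real.log q - Real.log (P3 a b c) ≤ q / P3 a b c - 1 := by
        have := Real.log_le_sub_one_of_pos (div_pos hqpos h0)
        rwa [Real.log_div hqpos.ne' h0.ne'] at this
      have := mul_le_mul_of_nonneg_left hle h0.le
      calc P3 a b c * Real.log (Pab a b) + P3 a b c * Real.log (Pbc b c)
            - P3 a b c * Real.log (Pb b) - P3 a b c * Real.log (P3 a b c)
          = P3 a b c * (Real.log q - Real.log (P3 a b c)) := by rw [hlogq]; ring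
        _ ≤ P3 a b c * (q / P3 a b c - 1) := this
        _ = q - P3 a b c := by
          rw [mul_sub, mul_div_assoc', mul_div_cancel_left₀ _ (h0.ne' : P3 a b c ≠ 0), mul_one]
  -- summing the RHS
  have hqsum : ∀ b, (∑ a, ∑ c, Pab a b * Pbc b c / Pb b) ≤ Pb b := by
    intro b
    have : (∑ a, ∑ c, Pab a b * Pbc b c / Pb b) = Pb b * Pb b / Pb b := by
      simp_rw [div_eq_mul_inv]
      calc ∑ a, ∑ c, Pab a b * Pbc b c * (Pb b)⁻¹
          = ∑ a, Pab a b * Pb b * (Pb b)⁻¹ := by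
            refine Finset.sum_congr rfl fun a _ => ?_
            rw [← Finset.sum_mul, ← Finset.mul_sum, hmargCb b]
        _ = Pb b * Pb b * (Pb b)⁻¹ := by
            rw [← Finset.sum_mul, ← Finset.sum_mul, hmargAb b]
    rw [this]
    rcases eq_or_lt_of_le (probOf_nonneg p hp B b : 0 ≤ Pb b) with h0 | h0
    · have h0' : Pb b = 0 := h0.symm
      rw [h0']; simp
    · rw [mul_div_assoc, div_self h0.ne', mul_one]
  -- entropies as sums
  have H3 : shannonEntropy p (fun ω => ((A ω, B ω), C ω))
      = -∑ a, ∑ b, ∑ c, P3 a b c * Real.log (P3 a b c) := by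
    simp only [shannonEntropy, Fintype.sum_prod_type, Real.negMulLog_def, neg_mul,
      Finset.sum_neg_distrib]
    rfl
  have HAB : shannonEntropy p (fun ω => (A ω, B ω))
      = -∑ a, ∑ b, Pab a b * Real.log (Pab a b) := by
    simp only [shannonEntropy, Fintype.sum_prod_type, Real.negMulLog_def, neg_mul,
      Finset.sum_neg_distrib]
    rfl
  have HBC : shannonEntropy p (fun ω => (B ω, C ω))
      = -∑ b, ∑ c, Pbc b c * Real.log (Pbc b c) := by
    simp only [shannonEntropy, Fintype.sum_prod_type, Real.negMulLog_def, neg_mul,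
      Finset.sum_neg_distrib]
    rfl
  have HB : shannonEntropy p B = -∑ b, Pb b * Real.log (Pb b) := by
    simp only [shannonEntropy, Real.negMulLog_def, neg_mul, Finset.sum_neg_distrib]
    rfl
  -- regrouping
  have f1 : ∑ a, ∑ b, ∑ c, P3 a b c * Real.log (Pab a b)
      = ∑ a, ∑ b, Pab a b * Real.log (Pab a b) := by
    refine Finset.sum_congr rfl fun a _ => Finset.sum_congr rfl fun b _ => ?_
    rw [← Finset.sum_mul, hmargC a b]
  have f2 : ∑ a, ∑ b, ∑ c, P3 a b c * Real.log (Pbc b c)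
      = ∑ b, ∑ c, Pbc b c * Real.log (Pbc b c) := by
    rw [Finset.sum_comm]
    refine Finset.sum_congr rfl fun b _ => ?_
    rw [Finset.sum_comm]
    refine Finset.sum_congr rfl fun c _ => ?_
    rw [← Finset.sum_mul, hmargA b c]
  have f3 : ∑ a, ∑ b, ∑ c, P3 a b c * Real.log (Pb b)
      = ∑ b, Pb b * Real.log (Pb b) := by
    have h1 : ∀ a, ∑ b, ∑ c, P3 a b c * Real.log (Pb b)
        = ∑ b, Pab a b * Real.log (Pb b) := by
      intro a
      refine Finset.sum_congr rfl fun b _ => ?_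
      rw [← Finset.sum_mul, hmargC a b]
    simp_rw [h1]
    rw [Finset.sum_comm]
    refine Finset.sum_congr rfl fun b _ => ?_
    rw [← Finset.sum_mul, hmargAb b]
  -- sum up the key inequality
  have hsum := Finset.sum_le_sum (fun a (_ : a ∈ (Finset.univ : Finset α)) =>
    Finset.sum_le_sum (fun b (_ : b ∈ (Finset.univ : Finset β)) =>
      Finset.sum_le_sum (fun c (_ : c ∈ (Finset.univ : Finset γ)) => key a b c)))
  simp only [Finset.sum_add_distrib, Finset.sum_sub_distrib] at hsum
  rw [f1, f2, f3] at hsum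
  have hP3sum : ∑ a, ∑ b, ∑ c, P3 a b c = ∑ b, Pb b := by
    simp_rw [hmargC]
    rw [Finset.sum_comm]
    exact Finset.sum_congr rfl fun b _ => hmargAb b
  have hqtot : ∑ a, ∑ b, ∑ c, Pab a b * Pbc b c / Pb b ≤ ∑ b, Pb b := by
    rw [Finset.sum_comm]
    exact Finset.sum_le_sum fun b _ => hqsum b
  rw [H3, HAB, HBC, HB]
  linarith [hsum, hqtot, hP3sum]
end helpers2

section m3
variable {Ω ι β γ : Type*} [Fintype Ω] [Fintype ι] [DecidableEq ι] [Fintype β] [DecidableEq β]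
  [Fintype γ] [DecidableEq γ] (p : Ω → ℝ) (Y : ι → Ω → β) (W : Ω → γ)

lemma margCI
    (hCI : ∀ (b : ι → β) (w : γ),
      probOf p (fun ω => (fun i => Y i ω, W ω)) (b, w) *
        (probOf p W w) ^ (Fintype.card ι - 1) =
      ∏ i, probOf p (fun ω => (Y i ω, W ω)) (b i, w))
    (S : Finset ι) (b : {i // i ∈ S} → β) (w : γ) :
    probOf p (fun ω => (jointVar Y S ω, W ω)) (b, w) * probOf p W w ^ (Fintype.card ι - 1)
      = (∏ i : {i // i ∈ S}, probOf p (fun ω => (Y i.1 ω, W ω)) (b i, w))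
        * probOf p W w ^ (Fintype.card ι - S.card) := by
  classical
  set e := Equiv.piEquivPiSubtypeProd (fun i => i ∈ S) (fun _ => β) with hedef
  have step1 : ∑ h0 : {i // ¬ i ∈ S} → β,
      probOf p (fun ω => (fun i => Y i ω, W ω)) (e.symm (b, h0), w)
      = probOf p (fun ω => (jointVar Y S ω, W ω)) (b, w) := by
    unfold probOf
    rw [Finset.sum_comm]
    refine Finset.sum_congr rfl fun ω _ => ?_
    have heq : ∀ h0 : {i // ¬ i ∈ S} → β, ((fun i => Y i ω) = e.symm (b, h0)) ↔
        (jointVar Y S ω = b ∧ (fun i : {i // ¬ i ∈ S} => Y i.1 ω) = h0) := by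
      intro h0
      rw [Equiv.eq_symm_apply]
      show ((fun x : {i // i ∈ S} => Y x.1 ω, fun x : {i // ¬ i ∈ S} => Y x.1 ω) :
        ({i // i ∈ S} → β) × ({i // ¬ i ∈ S} → β)) = (b, h0) ↔ _
      rw [Prod.mk.injEq]
      exact Iff.rfl
    by_cases hb : jointVar Y S ω = b <;> by_cases hw : W ω = w
    · simp only [Prod.mk.injEq, heq, hb, hw, true_and, and_true]
      rw [Finset.sum_ite_eq]
      simp
    · simp [Prod.mk.injEq, heq, hw]
    · simp [Prod.mk.injEq, heq, hb]
    · simp [Prod.mk.injEq, heq, hb, hw]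
  have hsplit : ∀ h0 : {i // ¬ i ∈ S} → β,
      ∏ i, probOf p (fun ω => (Y i ω, W ω)) (e.symm (b, h0) i, w)
      = (∏ i : {i // i ∈ S}, probOf p (fun ω => (Y i.1 ω, W ω)) (b i, w))
        * ∏ i : {i // ¬ i ∈ S}, probOf p (fun ω => (Y i.1 ω, W ω)) (h0 i, w) := by
    intro h0
    rw [← Fintype.prod_subtype_mul_prod_subtype (fun i => i ∈ S)
      (fun i => probOf p (fun ω => (Y i ω, W ω)) (e.symm (b, h0) i, w))]
    congr 1
    · refine Finset.prod_congr (Finset.ext fun x => by simp) fun x _ => ?_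
      have hx : e.symm (b, h0) x.1 = b x := by
        rw [hedef, Equiv.piEquivPiSubtypeProd_symm_apply, dif_pos x.2]
      rw [hx]
    · refine Finset.prod_congr (Finset.ext fun x => by simp) fun x _ => ?_
      have hx : e.symm (b, h0) x.1 = h0 x := by
        rw [hedef, Equiv.piEquivPiSubtypeProd_symm_apply, dif_neg x.2]
      rw [hx]
  have step2 : ∑ h0 : {i // ¬ i ∈ S} → β,
      ∏ i, probOf p (fun ω => (Y i ω, W ω)) (e.symm (b, h0) i, w)
      = (∏ i : {i // i ∈ S}, probOf p (fun ω => (Y i.1 ω, W ω)) (b i, w))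
        * probOf p W w ^ (Fintype.card ι - S.card) := by
    simp_rw [hsplit]
    rw [← Finset.mul_sum]
    congr 1
    have : ∑ h0 : {i // ¬ i ∈ S} → β,
        ∏ i : {i // ¬ i ∈ S}, probOf p (fun ω => (Y i.1 ω, W ω)) (h0 i, w)
        = ∏ i : {i // ¬ i ∈ S}, ∑ c : β, probOf p (fun ω => (Y i.1 ω, W ω)) (c, w) := by
      rw [Finset.prod_univ_sum, Fintype.piFinset_univ]
    rw [this]
    have : ∀ i : {i // ¬ i ∈ S}, ∑ c : β, probOf p (fun ω => (Y i.1 ω, W ω)) (c, w)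
        = probOf p W w := fun i => sum_probOf_fst p (Y i.1) W w
    simp_rw [this]
    rw [Finset.prod_const, Finset.card_univ, Fintype.card_subtype_compl, Fintype.card_coe]
  calc probOf p (fun ω => (jointVar Y S ω, W ω)) (b, w) * probOf p W w ^ (Fintype.card ι - 1)
      = (∑ h0 : {i // ¬ i ∈ S} → β,
          probOf p (fun ω => (fun i => Y i ω, W ω)) (e.symm (b, h0), w))
          * probOf p W w ^ (Fintype.card ι - 1) := by rw [step1]
    _ = ∑ h0 : {i // ¬ i ∈ S} → β,
          probOf p (fun ω => (fun i => Y i ω, W ω)) (e.symm (b, h0), w)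
          * probOf p W w ^ (Fintype.card ι - 1) := by rw [Finset.sum_mul]
    _ = ∑ h0 : {i // ¬ i ∈ S} → β,
          ∏ i, probOf p (fun ω => (Y i ω, W ω)) (e.symm (b, h0) i, w) :=
        Finset.sum_congr rfl fun h0 _ => hCI (e.symm (b, h0)) w
    _ = _ := step2
end m3

section m4
variable {Ω ι β γ : Type*} [Fintype Ω] [Fintype ι] [DecidableEq ι] [Fintype β] [DecidableEq β]
  [Fintype γ] [DecidableEq γ] (p : Ω → ℝ) (Y : ι → Ω → β) (W : Ω → γ)

lemma pairCI (hp : ∀ ω, 0 ≤ p ω)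
    (hCI : ∀ (b : ι → β) (w : γ),
      probOf p (fun ω => (fun i => Y i ω, W ω)) (b, w) *
        (probOf p W w) ^ (Fintype.card ι - 1) =
      ∏ i, probOf p (fun ω => (Y i ω, W ω)) (b i, w))
    (S : Finset ι) (z : ι) (hz : z ∉ S) (u : {i // i ∈ S} → β) (v : β) (w : γ) :
    probOf p (fun ω => ((jointVar Y S ω, Y z ω), W ω)) ((u, v), w) * probOf p W w
      = probOf p (fun ω => (jointVar Y S ω, W ω)) (u, w)
        * probOf p (fun ω => (Y z ω, W ω)) (v, w) := by
  classical
  set n := Fintype.card ι with hn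
  set s := S.card with hs
  -- glue
  set glue : {i // i ∈ insert z S} → β :=
    fun i => if h : i.1 = z then v else u ⟨i.1, (Finset.mem_insert.1 i.2).resolve_left h⟩
    with hglue
  set f : ({i // i ∈ insert z S} → β) × γ → (({i // i ∈ S} → β) × β) × γ :=
    fun g => ((fun i => g.1 ⟨i.1, Finset.mem_insert_of_mem i.2⟩,
      g.1 ⟨z, Finset.mem_insert_self z S⟩), g.2) with hf
  have hfinj : Function.Injective f := by
    rintro ⟨g1, c1⟩ ⟨g2, c2⟩ hfe
    simp only [hf, Prod.mk.injEq] at hfe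
    obtain ⟨⟨hS, hz'⟩, hc⟩ := hfe
    refine Prod.ext ?_ hc
    funext j
    rcases Finset.mem_insert.1 j.2 with h | h
    · rw [show j = (⟨z, Finset.mem_insert_self z S⟩ : {i // i ∈ insert z S}) from
        Subtype.ext h]
      exact hz'
    · exact congrFun hS ⟨j.1, h⟩
  have hfa : f (glue, w) = ((u, v), w) := by
    have h1 : (fun i : {i // i ∈ S} => glue ⟨i.1, Finset.mem_insert_of_mem i.2⟩) = u := by
      funext i
      have hne : i.1 ≠ z := fun h => hz (h ▸ i.2)
      simp [hglue, hne]
    have h2 : glue ⟨z, Finset.mem_insert_self z S⟩ = v := by simp [hglue]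
    simp only [hf]
    rw [h1, h2]
  have hrel : probOf p (fun ω => ((jointVar Y S ω, Y z ω), W ω)) ((u, v), w)
      = probOf p (fun ω => (jointVar Y (insert z S) ω, W ω)) (glue, w) := by
    have := probOf_comp_inj p (fun ω => (jointVar Y (insert z S) ω, W ω)) f hfinj (glue, w)
    rw [hfa] at this
    exact this
  rw [hrel]
  -- products
  set g : ι → ℝ := fun j => probOf p (fun ω => (Y j ω, W ω))
    ((if h : j = z then v else if h2 : j ∈ S then u ⟨j, h2⟩ else v), w) with hg
  have prodsplit : ∏ i : {x // x ∈ insert z S},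
      probOf p (fun ω => (Y i.1 ω, W ω)) (glue i, w)
      = probOf p (fun ω => (Y z ω, W ω)) (v, w)
        * ∏ i : {x // x ∈ S}, probOf p (fun ω => (Y i.1 ω, W ω)) (u i, w) := by
    have hFg : ∀ i : {x // x ∈ insert z S},
        probOf p (fun ω => (Y i.1 ω, W ω)) (glue i, w) = g i.1 := by
      intro i
      by_cases h : i.1 = z
      · simp only [hglue, hg, dif_pos h]
      · have hiS : i.1 ∈ S := (Finset.mem_insert.1 i.2).resolve_left h
        simp only [hglue, hg, dif_neg h, dif_pos hiS]
    calc ∏ i : {x // x ∈ insert z S}, probOf p (fun ω => (Y i.1 ω, W ω)) (glue i, w)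
        = ∏ i : {x // x ∈ insert z S}, g i.1 := Finset.prod_congr rfl fun i _ => hFg i
      _ = ∏ j ∈ insert z S, g j := Finset.prod_coe_sort _ _
      _ = g z * ∏ j ∈ S, g j := Finset.prod_insert hz
      _ = probOf p (fun ω => (Y z ω, W ω)) (v, w)
          * ∏ i : {x // x ∈ S}, probOf p (fun ω => (Y i.1 ω, W ω)) (u i, w) := by
          congr 1
          · simp [hg]
          · rw [← Finset.prod_coe_sort S g]
            refine Finset.prod_congr rfl fun i _ => ?_
            have h1 : i.1 ≠ z := fun h => hz (h ▸ i.2)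
            simp only [hg, dif_neg h1, dif_pos i.2]
  have hcard : (insert z S).card = s + 1 := Finset.card_insert_of_notMem hz
  have hle : s + 1 ≤ n := by rw [← hcard]; exact Finset.card_le_univ _
  have M1 := margCI p Y W hCI (insert z S) glue w
  have M2 := margCI p Y W hCI S u w
  rw [hcard] at M1
  rw [prodsplit] at M1
  by_cases hw : probOf p W w = 0
  · have h1 : probOf p (fun ω => (jointVar Y (insert z S) ω, W ω)) (glue, w) = 0 := by
      refine le_antisymm ?_ (probOf_nonneg p hp _ _)
      rw [← hw]
      exact probOf_le_of_implies p hp _ W _ w (fun ω hω => by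
        simpa using congrArg Prod.snd hω)
    have h2 : probOf p (fun ω => (jointVar Y S ω, W ω)) (u, w) = 0 := by
      refine le_antisymm ?_ (probOf_nonneg p hp _ _)
      rw [← hw]
      exact probOf_le_of_implies p hp _ W _ w (fun ω hω => by
        simpa using congrArg Prod.snd hω)
    rw [h1, h2, hw]; ring
  · have hpow : probOf p W w ^ (n - (s + 1)) * probOf p W w = probOf p W w ^ (n - s) := by
      rw [← pow_succ]
      congr 1
      omega
    have e1 : probOf p (fun ω => (jointVar Y (insert z S) ω, W ω)) (glue, w) * probOf p W w
        * probOf p W w ^ (n - 1)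
        = probOf p (fun ω => (jointVar Y S ω, W ω)) (u, w)
          * probOf p (fun ω => (Y z ω, W ω)) (v, w) * probOf p W w ^ (n - 1) := by
      calc probOf p (fun ω => (jointVar Y (insert z S) ω, W ω)) (glue, w) * probOf p W w
            * probOf p W w ^ (n - 1)
          = (probOf p (fun ω => (jointVar Y (insert z S) ω, W ω)) (glue, w)
            * probOf p W w ^ (n - 1)) * probOf p W w := by ring
        _ = (probOf p (fun ω => (Y z ω, W ω)) (v, w)
            * ∏ i : {x // x ∈ S}, probOf p (fun ω => (Y i.1 ω, W ω)) (u i, w))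
            * (probOf p W w ^ (n - (s + 1)) * probOf p W w) := by rw [M1]; ring
        _ = probOf p (fun ω => (Y z ω, W ω)) (v, w)
            * ((∏ i : {x // x ∈ S}, probOf p (fun ω => (Y i.1 ω, W ω)) (u i, w))
              * probOf p W w ^ (n - s)) := by rw [hpow]; ring
        _ = probOf p (fun ω => (Y z ω, W ω)) (v, w)
            * (probOf p (fun ω => (jointVar Y S ω, W ω)) (u, w) * probOf p W w ^ (n - 1)) := by
            rw [← M2]
        _ = _ := by ring
    exact mul_right_cancel₀ (pow_ne_zero _ hw) e1
end m4

/-- If `Y₁, …, Yₙ` are conditionally independent given `W`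
(`P(Y = b, W = w) ⬝ P(W = w)^(n-1) = ∏ i, P(Y i = b i, W = w)`), then the set
function `S ↦ I(Y_S ; W)` is submodular:
`I(Y_{S∪{z}};W) - I(Y_S;W) ≥ I(Y_{T∪{z}};W) - I(Y_T;W)` for `S ⊆ T`, `z ∉ T`. -/
theorem mutualInfo_submodular_of_condIndep {Ω ι β γ : Type*} [Fintype Ω] [Fintype ι]
    [DecidableEq ι] [Fintype β] [DecidableEq β] [Fintype γ] [DecidableEq γ]
    (p : Ω → ℝ) (hp : ∀ ω, 0 ≤ p ω) (hp1 : ∑ ω, p ω = 1)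
    (Y : ι → Ω → β) (W : Ω → γ)
    (hCI : ∀ (b : ι → β) (w : γ),
      probOf p (fun ω => (fun i => Y i ω, W ω)) (b, w) *
        (probOf p W w) ^ (Fintype.card ι - 1) =
      ∏ i, probOf p (fun ω => (Y i ω, W ω)) (b i, w)) :
    ∀ (S T : Finset ι) (z : ι), S ⊆ T → z ∉ T →
      mutualInfo p (jointVar Y (insert z T)) W - mutualInfo p (jointVar Y T) W ≤
      mutualInfo p (jointVar Y (insert z S)) W - mutualInfo p (jointVar Y S) W := by
  intro S T z hST hzT
  have hzS : z ∉ S := fun h => hzT (hST h)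
  -- conditional-independence entropy identity for any S' with z ∉ S'
  have hCIent : ∀ (S' : Finset ι), z ∉ S' →
      shannonEntropy p (fun ω => (jointVar Y (insert z S') ω, W ω)) + shannonEntropy p W
      = shannonEntropy p (fun ω => (jointVar Y S' ω, W ω))
        + shannonEntropy p (fun ω => (Y z ω, W ω)) := by
    intro S' hz
    have hrel : shannonEntropy p (fun ω => ((jointVar Y S' ω, Y z ω), W ω))
        = shannonEntropy p (fun ω => (jointVar Y (insert z S') ω, W ω)) := by
      set f : ({i // i ∈ insert z S'} → β) × γ → (({i // i ∈ S'} → β) × β) × γ :=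
          fun g =>
            ((fun i : {i // i ∈ S'} => g.1 ⟨i.1, Finset.mem_insert_of_mem i.2⟩,
              g.1 ⟨z, Finset.mem_insert_self z S'⟩), g.2) with hfdef
      have hfinj : Function.Injective f := by
        rw [hfdef]
        rintro ⟨g1, c1⟩ ⟨g2, c2⟩ hfe
        simp only [Prod.mk.injEq] at hfe
        obtain ⟨⟨hS', hz'⟩, hc⟩ := hfe
        refine Prod.ext ?_ hc
        funext j
        rcases Finset.mem_insert.1 j.2 with h | h
        · rw [show j = (⟨z, Finset.mem_insert_self z S'⟩ : {i // i ∈ insert z S'}) from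
            Subtype.ext h]
          exact hz'
        · exact congrFun hS' ⟨j.1, h⟩
      exact shannonEntropy_comp_inj p
        (fun ω => (jointVar Y (insert z S') ω, W ω)) f hfinj
    rw [← hrel]
    exact entropy_condIndep p hp (jointVar Y S') (Y z) W
      (fun u v w => pairCI p Y W hp hCI S' z hz u v w)
  -- entropy relabelings for the submodularity step
  have hT : shannonEntropy p (jointVar Y T)
      = shannonEntropy p (fun ω => (jointVar Y (T \ S) ω, jointVar Y S ω)) := by
    set f : ({i // i ∈ T} → β) → ({i // i ∈ T \ S} → β) × ({i // i ∈ S} → β) :=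
        fun g =>
          (fun i : {i // i ∈ T \ S} => g ⟨i.1, (Finset.mem_sdiff.1 i.2).1⟩,
            fun i : {i // i ∈ S} => g ⟨i.1, hST i.2⟩) with hfdef
    have hfinj : Function.Injective f := by
      rw [hfdef]
      intro g1 g2 hfe
      simp only [Prod.mk.injEq] at hfe
      funext j
      by_cases h : j.1 ∈ S
      · exact congrFun hfe.2 ⟨j.1, h⟩
      · exact congrFun hfe.1 ⟨j.1, Finset.mem_sdiff.2 ⟨j.2, h⟩⟩
    exact (shannonEntropy_comp_inj p (jointVar Y T) f hfinj).symm
  have hT' : shannonEntropy p (jointVar Y (insert z T))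
      = shannonEntropy p
        (fun ω => ((jointVar Y (T \ S) ω, jointVar Y S ω), Y z ω)) := by
    set f : ({i // i ∈ insert z T} → β) →
        (({i // i ∈ T \ S} → β) × ({i // i ∈ S} → β)) × β :=
        fun g =>
          ((fun i : {i // i ∈ T \ S} =>
              g ⟨i.1, Finset.mem_insert_of_mem (Finset.mem_sdiff.1 i.2).1⟩,
            fun i : {i // i ∈ S} => g ⟨i.1, Finset.mem_insert_of_mem (hST i.2)⟩),
            g ⟨z, Finset.mem_insert_self z T⟩) with hfdef
    have hfinj : Function.Injective f := by
      rw [hfdef]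
      intro g1 g2 hfe
      simp only [Prod.mk.injEq] at hfe
      obtain ⟨⟨h1, h2⟩, h3⟩ := hfe
      funext j
      rcases Finset.mem_insert.1 j.2 with h | h
      · rw [show j = (⟨z, Finset.mem_insert_self z T⟩ : {i // i ∈ insert z T}) from
          Subtype.ext h]
        exact h3
      · by_cases hS : j.1 ∈ S
        · exact congrFun h2 ⟨j.1, hS⟩
        · exact congrFun h1 ⟨j.1, Finset.mem_sdiff.2 ⟨h, hS⟩⟩
    exact (shannonEntropy_comp_inj p (jointVar Y (insert z T)) f hfinj).symm
  have hS' : shannonEntropy p (jointVar Y (insert z S))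
      = shannonEntropy p (fun ω => (jointVar Y S ω, Y z ω)) := by
    set f : ({i // i ∈ insert z S} → β) → ({i // i ∈ S} → β) × β :=
        fun g =>
          (fun i : {i // i ∈ S} => g ⟨i.1, Finset.mem_insert_of_mem i.2⟩,
            g ⟨z, Finset.mem_insert_self z S⟩) with hfdef
    have hfinj : Function.Injective f := by
      rw [hfdef]
      intro g1 g2 hfe
      simp only [Prod.mk.injEq] at hfe
      obtain ⟨h1, h2⟩ := hfe
      funext j
      rcases Finset.mem_insert.1 j.2 with h | h
      · rw [show j = (⟨z, Finset.mem_insert_self z S⟩ : {i // i ∈ insert z S}) from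
          Subtype.ext h]
        exact h2
      · exact congrFun h1 ⟨j.1, h⟩
    exact (shannonEntropy_comp_inj p (jointVar Y (insert z S)) f hfinj).symm
  have hsub := entropy_submodular p hp (jointVar Y (T \ S)) (jointVar Y S) (Y z)
  rw [← hT, ← hT', ← hS'] at hsub
  have eqT := hCIent T hzT
  have eqS := hCIent S hzS
  simp only [mutualInfo]
  linarith [hsub, eqT, eqS]
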